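/- Let A_1, …, A_m be positive semidefinite d×d complex matrices with Σ_{j=1}^m A_j = I and rank(A_j) ≤ l for every j, and set k_j = ‖A_j‖ (operator norm). Then l · Σ_{j=1}^m k_j ≥ d, and equality holds if and only if for every j there is an orthogonal projection P_j of rank l with A_j = k_j P_j. -/

import Mathlib

open Matrix
open scoped ComplexOrder

/-- The operator norm of a complex square matrix (induced by the Euclidean norm). -/
noncomputable def opNorm {n : Type*} [Fintype n] [DecidableEq n] (M : Matrix n n ℂ) : ℝ :=
  ‖Matrix.toEuclideanCLM (𝕜 := ℂ) M‖

/-- For a POVM `{A_j}` with all ranks at most `l` and `k_j = ‖A_j‖`,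
one has `l * Σ k_j ≥ d`, with equality iff each `A_j` is `k_j` times a rank-`l`
orthogonal projection. -/
lemma opNorm_nn {n : Type*} [Fintype n] [DecidableEq n] (M : Matrix n n ℂ) : 0 ≤ opNorm M :=
  norm_nonneg _

lemma eq_zero_of_opNorm_eq_zero {n : Type*} [Fintype n] [DecidableEq n] {M : Matrix n n ℂ}
    (h : opNorm M = 0) : M = 0 := by
  have h2 : Matrix.toEuclideanCLM (𝕜 := ℂ) M = 0 := norm_eq_zero.mp h
  have := (Matrix.toEuclideanCLM (𝕜 := ℂ) (n := n)).injective
  exact this (h2.trans (map_zero _).symm)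

lemma eig_le_opNorm {n : Type*} [Fintype n] [DecidableEq n] {M : Matrix n n ℂ}
    (hM : M.IsHermitian) (i : n) : hM.eigenvalues i ≤ opNorm M := by
  have hv : M *ᵥ ⇑(hM.eigenvectorBasis i) = (hM.eigenvalues i) • ⇑(hM.eigenvectorBasis i) :=
    hM.mulVec_eigenvectorBasis i
  set v : EuclideanSpace ℂ n := hM.eigenvectorBasis i with hvdef
  have hnv : ‖v‖ = 1 := hM.eigenvectorBasis.orthonormal.1 i
  have happ : Matrix.toEuclideanCLM (𝕜 := ℂ) M v = (hM.eigenvalues i : ℂ) • v := by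
    apply (WithLp.equiv 2 (n → ℂ)).injective
    simp only [WithLp.equiv_apply, Matrix.ofLp_toEuclideanCLM]
    ext x
    have := congrFun hv x
    simpa using this
  have hle := (Matrix.toEuclideanCLM (𝕜 := ℂ) M).le_opNorm v
  rw [happ, norm_smul, hnv, mul_one, mul_one] at hle
  calc hM.eigenvalues i ≤ ‖(hM.eigenvalues i : ℂ)‖ := by
        rw [Complex.norm_real]; exact le_abs_self _
    _ ≤ _ := hle

lemma trace_eq_sum_eig {n : Type*} [Fintype n] [DecidableEq n] {M : Matrix n n ℂ}
    (hM : M.IsHermitian) : M.trace = ∑ i, (hM.eigenvalues i : ℂ) := by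
  conv_lhs => rw [hM.spectral_theorem]
  rw [Unitary.conjStarAlgAut_apply, Matrix.trace_mul_cycle]
  have : (star (hM.eigenvectorUnitary : Matrix n n ℂ)) * (hM.eigenvectorUnitary : Matrix n n ℂ)
      = 1 := by
    exact Matrix.mem_unitaryGroup_iff'.mp (hM.eigenvectorUnitary).2
  rw [this, one_mul, Matrix.trace_diagonal]
  rfl

lemma trace_idem {n : Type*} [Fintype n] [DecidableEq n] {P : Matrix n n ℂ}
    (hh : Pᴴ = P) (hi : P * P = P) : P.trace = (P.rank : ℂ) := by
  have hM : P.IsHermitian := hh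
  have heig : ∀ i, hM.eigenvalues i = 0 ∨ hM.eigenvalues i = 1 := by
    intro i
    have hv : P *ᵥ ⇑(hM.eigenvectorBasis i) = (hM.eigenvalues i) • ⇑(hM.eigenvectorBasis i) :=
      hM.mulVec_eigenvectorBasis i
    have hv2 : P *ᵥ (P *ᵥ ⇑(hM.eigenvectorBasis i))
        = (hM.eigenvalues i * hM.eigenvalues i) • ⇑(hM.eigenvectorBasis i) := by
      rw [hv, Matrix.mulVec_smul, hv, smul_smul]
    rw [Matrix.mulVec_mulVec, hi, hv] at hv2
    have hvne : ⇑(hM.eigenvectorBasis i) ≠ 0 := by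
      have := hM.eigenvectorBasis.orthonormal.ne_zero i
      intro hc
      apply this
      ext x
      exact congrFun hc x
    have : (hM.eigenvalues i * hM.eigenvalues i - hM.eigenvalues i) • ⇑(hM.eigenvectorBasis i)
        = 0 := by
      rw [sub_smul, hv2, sub_self]
    rcases smul_eq_zero.mp this with h | h
    · have : hM.eigenvalues i * (hM.eigenvalues i - 1) = 0 := by ring_nf; linarith [h]
      rcases mul_eq_zero.mp this with h' | h'
      · exact Or.inl h'
      · exact Or.inr (by linarith)
    · exact absurd h hvne
  rw [trace_eq_sum_eig hM, hM.rank_eq_card_non_zero_eigs]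
  classical
  rw [← Finset.sum_filter_ne_zero]
  rw [Finset.sum_congr rfl (fun i hi' => ?_), Finset.sum_const, nsmul_eq_mul, mul_one,
    Fintype.card_subtype]
  · norm_num
  · simp only [Finset.mem_filter] at hi'
    have : hM.eigenvalues i = 1 := by
      rcases heig i with h | h
      · exact absurd (by exact_mod_cast h) hi'.2
      · exact h
    rw [this]; norm_num

lemma key {d l : ℕ} {M : Matrix (Fin d) (Fin d) ℂ} (hpsd : M.PosSemidef) (hrank : M.rank ≤ l)
    (hne : opNorm M ≠ 0) (htr : M.trace.re = l * opNorm M) :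
    ∃ P : Matrix (Fin d) (Fin d) ℂ, Pᴴ = P ∧ P * P = P ∧ P.rank = l ∧
      M = (↑(opNorm M) : ℂ) • P := by
  classical
  have hM : M.IsHermitian := hpsd.1
  set k := opNorm M with hkdef
  have hk : 0 < k := lt_of_le_of_ne (opNorm_nn M) (Ne.symm hne)
  have hnn : ∀ i, 0 ≤ hM.eigenvalues i := hpsd.eigenvalues_nonneg
  have hle : ∀ i, hM.eigenvalues i ≤ k := fun i => eig_le_opNorm hM i
  have hsum : ∑ i, hM.eigenvalues i = l * k := by
    have := trace_eq_sum_eig hM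
    have h2 : M.trace.re = ∑ i, hM.eigenvalues i := by
      rw [this]; push_cast; rw [Complex.re_sum]; simp
    linarith [htr, h2]
  set S := Finset.univ.filter (fun i => hM.eigenvalues i ≠ 0) with hS
  have hcard : S.card = M.rank := by
    rw [hM.rank_eq_card_non_zero_eigs, Fintype.card_subtype]
  have hsum2 : ∑ i ∈ S, hM.eigenvalues i = l * k := by
    rw [hS, Finset.sum_filter_ne_zero]; exact hsum
  have hbound : (l : ℝ) * k ≤ S.card * k := by
    rw [← hsum2]
    calc ∑ i ∈ S, hM.eigenvalues i ≤ ∑ _i ∈ S, k := Finset.sum_le_sum (fun i _ => hle i)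
      _ = S.card * k := by rw [Finset.sum_const, nsmul_eq_mul]
  have hlS : l ≤ S.card := by
    have h2 := le_of_mul_le_mul_right hbound hk
    exact_mod_cast h2
  have hScard : S.card = l := le_antisymm (hcard ▸ hrank) hlS
  have heigS : ∀ i ∈ S, hM.eigenvalues i = k := by
    intro i hi
    by_contra hne'
    have hlt : hM.eigenvalues i < k := lt_of_le_of_ne (hle i) hne'
    have : ∑ j ∈ S, hM.eigenvalues j < S.card * k := by
      calc ∑ j ∈ S, hM.eigenvalues j < ∑ _j ∈ S, k := by
            apply Finset.sum_lt_sum (fun j _ => hle j) ⟨i, hi, hlt⟩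
        _ = S.card * k := by rw [Finset.sum_const, nsmul_eq_mul]
    rw [hsum2, hScard] at this
    linarith
  have heig : ∀ i, hM.eigenvalues i = 0 ∨ hM.eigenvalues i = k := by
    intro i
    by_cases h : hM.eigenvalues i = 0
    · exact Or.inl h
    · exact Or.inr (heigS i (by simp [hS, h]))
  -- construct P
  set U : Matrix (Fin d) (Fin d) ℂ := (hM.eigenvectorUnitary : Matrix (Fin d) (Fin d) ℂ)
    with hUdef
  have hU1 : U * star U = 1 := Matrix.mem_unitaryGroup_iff.mp (hM.eigenvectorUnitary).2
  have hU2 : star U * U = 1 := Matrix.mem_unitaryGroup_iff'.mp (hM.eigenvectorUnitary).2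
  set w : Fin d → ℂ := fun i => if hM.eigenvalues i = 0 then 0 else 1 with hw
  refine ⟨U * diagonal w * star U, ?_, ?_, ?_, ?_⟩
  · rw [Matrix.conjTranspose_mul, Matrix.conjTranspose_mul, Matrix.diagonal_conjTranspose]
    have : star w = w := by
      funext i
      rw [hw]
      by_cases h : hM.eigenvalues i = 0 <;> simp [h]
    rw [this, Matrix.star_eq_conjTranspose, Matrix.conjTranspose_conjTranspose, mul_assoc]
  · calc U * diagonal w * star U * (U * diagonal w * star U)
        = U * diagonal w * (star U * U) * diagonal w * star U := by
          simp only [mul_assoc]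
      _ = U * (diagonal w * diagonal w) * star U := by rw [hU2]; simp only [mul_assoc, mul_one]
      _ = U * diagonal w * star U := by
          have hww : (fun i => w i * w i) = w := by
            funext i
            rw [hw]
            by_cases h : hM.eigenvalues i = 0 <;> simp [h]
          rw [Matrix.diagonal_mul_diagonal, hww, mul_assoc]
  · have hdetU : IsUnit U.det := by
      apply IsUnit.of_mul_eq_one (star U).det
      rw [← Matrix.det_mul, hU1, Matrix.det_one]
    have hdetU' : IsUnit (star U).det := by
      apply IsUnit.of_mul_eq_one U.det
      rw [← Matrix.det_mul, hU2, Matrix.det_one]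
    rw [mul_assoc, Matrix.rank_mul_eq_right_of_isUnit_det U _ hdetU,
      Matrix.rank_mul_eq_left_of_isUnit_det _ _ hdetU', Matrix.rank_diagonal,
      Fintype.card_subtype]
    rw [← hScard]
    congr 1
    apply Finset.filter_congr
    intro i _
    rw [hw]
    by_cases h : hM.eigenvalues i = 0 <;> simp [h]
  · conv_lhs => rw [hM.spectral_theorem]
    rw [Unitary.conjStarAlgAut_apply, ← hUdef, ← smul_mul_assoc, ← mul_smul_comm]
    congr 2
    ext i j
    by_cases hij : i = j <;> rcases heig j with h | h <;>
      simp [hw, Matrix.diagonal_apply, hij, h, hne, Function.comp, Complex.ofReal_ne_zero]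

theorem stmt_5 (d l m : ℕ) (hd : 0 < d)
    (A : Fin m → Matrix (Fin d) (Fin d) ℂ)
    (hpsd : ∀ j, (A j).PosSemidef)
    (hsum : ∑ j, A j = 1)
    (hrank : ∀ j, (A j).rank ≤ l) :
    (d : ℝ) ≤ (l : ℝ) * ∑ j, opNorm (A j) ∧
    ((l : ℝ) * ∑ j, opNorm (A j) = (d : ℝ) ↔
      ∀ j, ∃ P : Matrix (Fin d) (Fin d) ℂ, Pᴴ = P ∧ P * P = P ∧ P.rank = l ∧
        A j = (↑(opNorm (A j)) : ℂ) • P) := by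
  classical
  have hherm : ∀ j, (A j).IsHermitian := fun j => (hpsd j).1
  have htr_le : ∀ j, (A j).trace.re ≤ (l : ℝ) * opNorm (A j) := by
    intro j
    have htrre : (A j).trace.re = ∑ i, (hherm j).eigenvalues i := by
      rw [trace_eq_sum_eig (hherm j), Complex.re_sum]; simp
    rw [htrre]
    set S := Finset.univ.filter (fun i => (hherm j).eigenvalues i ≠ 0) with hS
    have hcard : S.card ≤ l := by
      have : S.card = (A j).rank := by
        rw [(hherm j).rank_eq_card_non_zero_eigs, Fintype.card_subtype]
      rw [this]; exact hrank j
    calc ∑ i, (hherm j).eigenvalues i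
        = ∑ i ∈ S, (hherm j).eigenvalues i := (Finset.sum_filter_ne_zero _).symm
      _ ≤ ∑ _i ∈ S, opNorm (A j) := Finset.sum_le_sum fun i _ => eig_le_opNorm _ i
      _ = S.card * opNorm (A j) := by rw [Finset.sum_const, nsmul_eq_mul]
      _ ≤ l * opNorm (A j) := by
          apply mul_le_mul_of_nonneg_right _ (opNorm_nn _)
          exact_mod_cast hcard
  have hdsum : ∑ j, (A j).trace.re = (d : ℝ) := by
    have h1 : ∑ j, (A j).trace = (d : ℂ) := by
      rw [← Matrix.trace_sum, hsum, Matrix.trace_one]; simp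
    calc ∑ j, (A j).trace.re = (∑ j, (A j).trace).re := by rw [Complex.re_sum]
      _ = (d : ℝ) := by rw [h1]; simp
  have hineq : (d : ℝ) ≤ (l : ℝ) * ∑ j, opNorm (A j) := by
    rw [Finset.mul_sum, ← hdsum]
    exact Finset.sum_le_sum (fun j _ => htr_le j)
  refine ⟨hineq, ?_, ?_⟩
  · intro heq j
    have hall : ∀ j', (A j').trace.re = (l : ℝ) * opNorm (A j') := by
      have h0 : ∑ j', ((l : ℝ) * opNorm (A j') - (A j').trace.re) = 0 := by
        rw [Finset.sum_sub_distrib, hdsum, ← Finset.mul_sum, heq]; ring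
      intro j'
      have := (Finset.sum_eq_zero_iff_of_nonneg
        (fun j'' _ => sub_nonneg.mpr (htr_le j''))).mp h0 j' (Finset.mem_univ _)
      linarith
    by_cases hk : opNorm (A j) = 0
    · have hAj : A j = 0 := eq_zero_of_opNorm_eq_zero hk
      have hex : ∃ j', opNorm (A j') ≠ 0 := by
        by_contra hc
        push_neg at hc
        have hz : ∀ j', A j' = 0 := fun j' => eq_zero_of_opNorm_eq_zero (hc j')
        have h10 : (1 : Matrix (Fin d) (Fin d) ℂ) = 0 := by
          rw [← hsum]; exact Finset.sum_eq_zero (fun j' _ => hz j')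
        have := congrFun (congrFun h10 ⟨0, hd⟩) ⟨0, hd⟩
        simp [Matrix.one_apply] at this
      obtain ⟨j', hj'⟩ := hex
      obtain ⟨P, hP1, hP2, hP3, hP4⟩ :=
        key (hpsd j') (hrank j') hj' ((hall j').trans rfl)
      have hld : l ≤ d := by
        rw [← hP3]
        calc P.rank ≤ Fintype.card (Fin d) := P.rank_le_card_width
          _ = d := Fintype.card_fin d
      refine ⟨Matrix.diagonal (fun i : Fin d => if (i : ℕ) < l then (1 : ℂ) else 0),
        ?_, ?_, ?_, ?_⟩
      · ext i j
        by_cases hij : i = j <;> by_cases h : (j : ℕ) < l <;>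
          simp [Matrix.conjTranspose_apply, Matrix.diagonal_apply, hij, h, eq_comm]
      · rw [Matrix.diagonal_mul_diagonal]
        ext i j
        by_cases hij : i = j <;> by_cases h : (j : ℕ) < l <;>
          simp [Matrix.diagonal_apply, hij, h]
      · rw [Matrix.rank_diagonal]
        have hpred : ∀ i : Fin d, ((if (i : ℕ) < l then (1 : ℂ) else 0) ≠ 0 ↔ (i : ℕ) < l) := by
          intro i; by_cases h : (i : ℕ) < l <;> simp [h]
        rw [Fintype.card_congr (Equiv.subtypeEquivRight hpred)]
        exact Fintype.card_congr
          { toFun := fun x => (⟨(x.1 : ℕ), x.2⟩ : Fin l)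
            invFun := fun x => ⟨⟨(x : ℕ), lt_of_lt_of_le x.2 hld⟩, x.2⟩
            left_inv := fun x => by ext; rfl
            right_inv := fun x => rfl } |>.trans (Fintype.card_fin l)
      · rw [hk, hAj]; simp
    · exact key (hpsd j) (hrank j) hk (hall j)
  · intro hP
    have htr : ∀ j, (A j).trace = (↑(opNorm (A j)) : ℂ) * l := by
      intro j
      obtain ⟨P, hP1, hP2, hP3, hP4⟩ := hP j
      conv_lhs => rw [hP4]
      rw [Matrix.trace_smul, trace_idem hP1 hP2, hP3, smul_eq_mul]
    have h1 : ∑ j, (A j).trace = (d : ℂ) := by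
      rw [← Matrix.trace_sum, hsum, Matrix.trace_one]; simp
    rw [Finset.sum_congr rfl (fun j _ => htr j)] at h1
    have h2 : ((∑ j, opNorm (A j) * l : ℝ) : ℂ) = ((d : ℝ) : ℂ) := by
      push_cast
      rw [← h1]
    have h3 : ∑ j, opNorm (A j) * l = (d : ℝ) := by exact_mod_cast h2
    rw [← Finset.sum_mul] at h3
    linarith [h3]
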